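/- If R(r,t) denotes the supremum of rates k/n over all strict-availability codes with parameters (n,k,r,t) over all finite fields, then R(r,t) = 1 − t/(r+1) + (t/(r+1))·R(t−1, r+1). -/

import Mathlib

open Finset

/-- `H` is a parity check matrix of a strict availability code with locality `r` and
availability `t`: every row has weight `r+1`, every column has weight `t`, and the
supports of any two distinct rows intersect in at most one coordinate. -/
def IsStrictAvailPCM {F : Type} [Zero F] [DecidableEq F] {m n : ℕ}
    (H : Matrix (Fin m) (Fin n) F) (r t : ℕ) : Prop :=
  (∀ i : Fin m, (univ.filter (fun j => H i j ≠ 0)).card = r + 1) ∧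
  (∀ j : Fin n, (univ.filter (fun i => H i j ≠ 0)).card = t) ∧
  (∀ i₁ i₂ : Fin m, i₁ ≠ i₂ →
    (univ.filter (fun j => H i₁ j ≠ 0 ∧ H i₂ j ≠ 0)).card ≤ 1)

/-- The supremum of rates `k/n` of `(n,k,r,t)` strict availability codes, over all block
lengths `n` and all finite fields; here `k = n - rank H` is the dimension of the null
space of the parity check matrix `H`. -/
noncomputable def supRate (r t : ℕ) : ℝ :=
  sSup {x : ℝ | ∃ (F : Type) (_ : Field F) (_ : Fintype F) (_ : DecidableEq F)
    (n m : ℕ) (H : Matrix (Fin m) (Fin n) F),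
    0 < n ∧ IsStrictAvailPCM H r t ∧ x = ((n - H.rank : ℕ) : ℝ) / n}

/-! ### Auxiliary material -/


def Sset (r t : ℕ) : Set ℝ :=
  {x : ℝ | ∃ (F : Type) (_ : Field F) (_ : Fintype F) (_ : DecidableEq F)
    (n m : ℕ) (H : Matrix (Fin m) (Fin n) F),
    0 < n ∧ IsStrictAvailPCM H r t ∧ x = ((n - H.rank : ℕ) : ℝ) / n}

lemma supRate_eq_sSup (r t : ℕ) : supRate r t = sSup (Sset r t) := rfl

lemma finCast_inj {p k : ℕ} [NeZero p] (hk : k ≤ p) {a b : Fin k}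
    (h : ((a : ℕ) : ZMod p) = ((b : ℕ) : ZMod p)) : a = b := by
  have ha := ZMod.val_cast_of_lt (lt_of_lt_of_le a.isLt hk)
  have hb := ZMod.val_cast_of_lt (lt_of_lt_of_le b.isLt hk)
  exact Fin.ext (by rw [← ha, ← hb, h])

lemma cast_eq_iff {p : ℕ} [NeZero p] (y : Fin p) (z : ZMod p) :
    ((y : ℕ) : ZMod p) = z ↔ y = ⟨z.val, ZMod.val_lt z⟩ := by
  constructor
  · intro h
    apply Fin.ext
    simp only [← h, ZMod.val_cast_of_lt y.isLt]
  · rintro rfl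
    exact ZMod.natCast_rightInverse z

lemma ite_ne_zero_iff {p : ℕ} [Fact p.Prime] (C : Prop) [Decidable C] :
    ((if C then (1 : ZMod p) else 0) ≠ 0) ↔ C := by
  split_ifs with h <;> simp [h]

/-- cardinality of the graph of a function -/
lemma card_graph {α β : Type*} [Fintype α] [Fintype β] [DecidableEq α] [DecidableEq β]
    (f : α → β) : (univ.filter (fun q : α × β => q.2 = f q.1)).card = Fintype.card α := by
  rw [← Finset.card_univ]
  apply Finset.card_nbij' (fun q => q.1) (fun x => (x, f x))
  · intro a _; exact mem_univ _
  · intro a _; simp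
  · intro a ha
    simp only [Finset.mem_coe, Finset.mem_filter] at ha
    exact Prod.ext rfl ha.2.symm
  · intro a _; rfl

/-- The construction: a strict availability parity check matrix over `ZMod p`
for any prime `p ≥ max (r+1) t`. -/
lemma construction (r t p : ℕ) (hp : p.Prime) (ha : r + 1 ≤ p) (htp : t ≤ p) :
    ∃ H : Matrix (Fin (t * p)) (Fin ((r + 1) * p)) (ZMod p), IsStrictAvailPCM H r t := by
  haveI : Fact p.Prime := ⟨hp⟩
  set e1 : Fin t × Fin p ≃ Fin (t * p) := finProdFinEquiv with he1
  set e2 : Fin (r + 1) × Fin p ≃ Fin ((r + 1) * p) := finProdFinEquiv with he2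
  refine ⟨fun i j =>
    if (((e2.symm j).2 : ℕ) : ZMod p)
        = (((e1.symm i).1 : ℕ) : ZMod p) * (((e2.symm j).1 : ℕ) : ZMod p)
            + (((e1.symm i).2 : ℕ) : ZMod p) then 1 else 0, ?_, ?_, ?_⟩
  · -- row weights
    intro i
    set s := (e1.symm i).1
    set b := (e1.symm i).2
    calc (univ.filter fun j => (if (((e2.symm j).2 : ℕ) : ZMod p)
          = ((s : ℕ) : ZMod p) * (((e2.symm j).1 : ℕ) : ZMod p) + ((b : ℕ) : ZMod p)
          then (1 : ZMod p) else 0) ≠ 0).card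
        = (univ.filter (fun q : Fin (r + 1) × Fin p =>
            q.2 = ⟨(((s : ℕ) : ZMod p) * ((q.1 : ℕ) : ZMod p) + ((b : ℕ) : ZMod p)).val,
              ZMod.val_lt _⟩)).card := by
          apply Finset.card_equiv e2.symm
          intro j
          simp only [mem_filter, mem_univ, true_and]
          rw [ite_ne_zero_iff, cast_eq_iff]
      _ = r + 1 := by
          refine (card_graph (fun q1 : Fin (r + 1) =>
            (⟨(((s : ℕ) : ZMod p) * ((q1 : ℕ) : ZMod p) + ((b : ℕ) : ZMod p)).val,
              ZMod.val_lt _⟩ : Fin p))).trans ?_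
          simp
  · -- column weights
    intro j
    set x := (e2.symm j).1
    set y := (e2.symm j).2
    calc (univ.filter fun i => (if ((y : ℕ) : ZMod p)
          = (((e1.symm i).1 : ℕ) : ZMod p) * ((x : ℕ) : ZMod p) + (((e1.symm i).2 : ℕ) : ZMod p)
          then (1 : ZMod p) else 0) ≠ 0).card
        = (univ.filter (fun q : Fin t × Fin p =>
            q.2 = ⟨(((y : ℕ) : ZMod p) - ((q.1 : ℕ) : ZMod p) * ((x : ℕ) : ZMod p)).val,
              ZMod.val_lt _⟩)).card := by
          apply Finset.card_equiv e1.symm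
          intro i
          simp only [mem_filter, mem_univ, true_and]
          rw [ite_ne_zero_iff, ← cast_eq_iff]
          constructor
          · intro h; linear_combination -h
          · intro h; linear_combination -h
      _ = t := by
          refine (card_graph (fun q1 : Fin t =>
            (⟨(((y : ℕ) : ZMod p) - ((q1 : ℕ) : ZMod p) * ((x : ℕ) : ZMod p)).val,
              ZMod.val_lt _⟩ : Fin p))).trans ?_
          simp
  · -- intersections
    intro i₁ i₂ hne
    rw [Finset.card_le_one]
    intro j hj j' hj'
    simp only [mem_filter, mem_univ, true_and, ne_eq, ite_eq_right_iff, one_ne_zero,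
      imp_false, not_not] at hj hj'
    obtain ⟨h1, h2⟩ := hj
    obtain ⟨h1', h2'⟩ := hj'
    by_cases hs : (e1.symm i₁).1 = (e1.symm i₂).1
    · exfalso
      rw [hs] at h1 h1'
      have hb : (((e1.symm i₁).2 : ℕ) : ZMod p) = (((e1.symm i₂).2 : ℕ) : ZMod p) :=
        add_left_cancel (h1.symm.trans h2)
      exact hne (e1.symm.injective (Prod.ext hs (finCast_inj le_rfl hb)))
    · have hS : (((e1.symm i₁).1 : ℕ) : ZMod p) ≠ (((e1.symm i₂).1 : ℕ) : ZMod p) :=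
        fun h => hs (finCast_inj htp h)
      have hd : (((e1.symm i₁).1 : ℕ) : ZMod p) - (((e1.symm i₂).1 : ℕ) : ZMod p) ≠ 0 :=
        sub_ne_zero.mpr hS
      have e1eq : ((((e1.symm i₁).1 : ℕ) : ZMod p) - (((e1.symm i₂).1 : ℕ) : ZMod p))
            * (((e2.symm j).1 : ℕ) : ZMod p)
          = (((e1.symm i₂).2 : ℕ) : ZMod p) - (((e1.symm i₁).2 : ℕ) : ZMod p) := by
        linear_combination h1.symm.trans h2
      have e2eq : ((((e1.symm i₁).1 : ℕ) : ZMod p) - (((e1.symm i₂).1 : ℕ) : ZMod p))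
            * (((e2.symm j').1 : ℕ) : ZMod p)
          = (((e1.symm i₂).2 : ℕ) : ZMod p) - (((e1.symm i₁).2 : ℕ) : ZMod p) := by
        linear_combination h1'.symm.trans h2'
      have hx : (((e2.symm j).1 : ℕ) : ZMod p) = (((e2.symm j').1 : ℕ) : ZMod p) :=
        mul_left_cancel₀ hd (e1eq.trans e2eq.symm)
      have hxf : (e2.symm j).1 = (e2.symm j').1 := finCast_inj ha hx
      have hy : (((e2.symm j).2 : ℕ) : ZMod p) = (((e2.symm j').2 : ℕ) : ZMod p) := by
        rw [h1, h1', hx]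
      exact e2.symm.injective (Prod.ext hxf (finCast_inj le_rfl hy))

lemma double_count {F : Type} [Zero F] [DecidableEq F] {m n a t : ℕ}
    (H : Matrix (Fin m) (Fin n) F)
    (h1 : ∀ i, (univ.filter (fun j => H i j ≠ 0)).card = a)
    (h2 : ∀ j, (univ.filter (fun i => H i j ≠ 0)).card = t) :
    m * a = n * t := by
  have key : ∑ i : Fin m, (univ.filter (fun j => H i j ≠ 0)).card
      = ∑ j : Fin n, (univ.filter (fun i => H i j ≠ 0)).card := by
    simp_rw [Finset.card_filter]
    exact Finset.sum_comm
  simpa [h1, h2, Finset.sum_const, Finset.card_univ, mul_comm] using key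

lemma transpose_pcm {F : Type} [Zero F] [DecidableEq F] {m n r t : ℕ}
    (H : Matrix (Fin m) (Fin n) F) (h : IsStrictAvailPCM H r t) (ht : 1 ≤ t) :
    IsStrictAvailPCM H.transpose (t - 1) (r + 1) := by
  obtain ⟨h1, h2, h3⟩ := h
  refine ⟨?_, ?_, ?_⟩
  · intro j
    rw [show t - 1 + 1 = t from Nat.succ_pred_eq_of_pos ht]
    exact h2 j
  · intro i
    exact h1 i
  · intro j₁ j₂ hne
    rw [Finset.card_le_one]
    intro i₁ hi₁ i₂ hi₂
    by_contra hii
    simp only [Finset.mem_filter, mem_univ, true_and, Matrix.transpose_apply] at hi₁ hi₂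
    replace hi₁ := (Finset.mem_filter.mp hi₁).2
    replace hi₂ := (Finset.mem_filter.mp hi₂).2
    have hcard : 1 < (univ.filter (fun j => H i₁ j ≠ 0 ∧ H i₂ j ≠ 0)).card := by
      apply Finset.one_lt_card_iff.mpr
      exact ⟨j₁, j₂, by simp [hi₁.1, hi₂.1], by simp [hi₁.2, hi₂.2], hne⟩
    have := h3 i₁ i₂ hii
    omega

/-- If some column has positive weight then there are rows. -/
lemma pos_rows {F : Type} [Zero F] [DecidableEq F] {m n r t : ℕ}
    (H : Matrix (Fin m) (Fin n) F) (h : IsStrictAvailPCM H r t) (hn : 0 < n) (ht : 1 ≤ t) :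
    0 < m := by
  have := h.2.1 ⟨0, hn⟩
  rcases Nat.eq_zero_or_pos m with hm | hm
  · subst hm
    simp [Finset.filter_eq_empty_iff] at this
    omega
  · exact hm

lemma rate_eq {m n ρ r t : ℕ} (hm : 0 < m) (hn : 0 < n) (hρn : ρ ≤ n) (hρm : ρ ≤ m)
    (hcount : m * (r + 1) = n * t) (ht : 0 < t) :
    ((n - ρ : ℕ) : ℝ) / n
      = 1 - (t : ℝ) / (r + 1) + ((t : ℝ) / (r + 1)) * (((m - ρ : ℕ) : ℝ) / m) := by
  have hmr : ((m : ℝ)) * (r + 1) = n * t := by exact_mod_cast hcount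
  have hm' : (m : ℝ) ≠ 0 := Nat.cast_ne_zero.mpr hm.ne'
  have hn' : (n : ℝ) ≠ 0 := Nat.cast_ne_zero.mpr hn.ne'
  have hr1 : ((r : ℝ) + 1) ≠ 0 := by positivity
  have key : ((ρ : ℝ)) / n = (t : ℝ) / ((r : ℝ) + 1) * ((ρ : ℝ) / m) := by
    rw [div_mul_div_comm, div_eq_div_iff hn' (by positivity)]
    linear_combination (ρ : ℝ) * hmr
  rw [Nat.cast_sub hρn, Nat.cast_sub hρm, sub_div, sub_div, div_self hn', div_self hm']
  linear_combination -key

lemma mem_le_one {r t : ℕ} {x : ℝ} (hx : x ∈ Sset r t) : x ≤ 1 := by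
  obtain ⟨F, _, _, _, n, m, H, hn, _, rfl⟩ := hx
  rw [div_le_one (by exact_mod_cast hn)]
  exact_mod_cast Nat.cast_le.mpr (Nat.sub_le n _)

lemma Sset_nonempty (r t : ℕ) (ht : 1 ≤ t) : (Sset r t).Nonempty := by
  obtain ⟨p, hple, hp⟩ := Nat.exists_infinite_primes (max (r + 1) t)
  obtain ⟨H, hH⟩ := construction r t p hp (le_trans (le_max_left _ _) hple)
    (le_trans (le_max_right _ _) hple)
  haveI : Fact p.Prime := ⟨hp⟩
  have hn : 0 < (r + 1) * p := Nat.mul_pos (Nat.succ_pos r) hp.pos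
  exact ⟨_, ZMod p, inferInstance, inferInstance, inferInstance, (r + 1) * p, t * p, H,
    hn, hH, rfl⟩

lemma Sset_eq (r t : ℕ) (hr : 1 ≤ r) (ht : 1 ≤ t) :
    Sset r t = (fun x => 1 - (t : ℝ) / (r + 1) + ((t : ℝ) / (r + 1)) * x) '' Sset (t - 1) (r + 1) := by
  ext x
  constructor
  · rintro ⟨F, iF, iFt, iDE, n, m, H, hn, hpcm, rfl⟩
    have hm : 0 < m := pos_rows H hpcm hn ht
    refine ⟨((m - H.transpose.rank : ℕ) : ℝ) / m,
      ⟨F, iF, iFt, iDE, m, n, H.transpose, hm, transpose_pcm H hpcm ht, rfl⟩, ?_⟩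
    show 1 - (t : ℝ) / (r + 1) + ((t : ℝ) / (r + 1)) * (((m - H.transpose.rank : ℕ) : ℝ) / m)
      = ((n - H.rank : ℕ) : ℝ) / n
    rw [Matrix.rank_transpose]
    have hcount : m * (r + 1) = n * t := double_count H hpcm.1 hpcm.2.1
    have h1 : H.rank ≤ n := by simpa using H.rank_le_card_width
    have h2 : H.rank ≤ m := by simpa using H.rank_le_card_height
    exact (rate_eq hm hn h1 h2 hcount ht).symm
  · rintro ⟨x', ⟨F, iF, iFt, iDE, n, m, H, hn, hpcm, rfl⟩, rfl⟩
    have hm : 0 < m := pos_rows H hpcm hn (by omega)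
    have hpcm' : IsStrictAvailPCM H.transpose r t := by
      have h' := transpose_pcm H hpcm (by omega)
      rwa [show r + 1 - 1 = r from rfl,
        show t - 1 + 1 = t from Nat.succ_pred_eq_of_pos ht] at h'
    refine ⟨F, iF, iFt, iDE, m, n, H.transpose, hm, hpcm', ?_⟩
    show 1 - (t : ℝ) / (r + 1) + ((t : ℝ) / (r + 1)) * (((n - H.rank : ℕ) : ℝ) / n)
      = ((m - H.transpose.rank : ℕ) : ℝ) / m
    rw [Matrix.rank_transpose]
    have hcount : m * (t - 1 + 1) = n * (r + 1) := double_count H hpcm.1 hpcm.2.1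
    rw [Nat.sub_add_cancel ht] at hcount
    have h1 : H.rank ≤ n := by simpa using H.rank_le_card_width
    have h2 : H.rank ≤ m := by simpa using H.rank_le_card_height
    exact (rate_eq (m := n) (n := m) hn hm h2 h1 hcount.symm ht).symm


/-- `R(r,t) = 1 - t/(r+1) + (t/(r+1)) R(t-1, r+1)`. -/
theorem stmt3 (r t : ℕ) (hr : 1 ≤ r) (ht : 1 ≤ t) :
    supRate r t = 1 - (t : ℝ) / (r + 1) + ((t : ℝ) / (r + 1)) * supRate (t - 1) (r + 1) := by
  have ht' : (0 : ℝ) < t := by exact_mod_cast ht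
  have hc : (0 : ℝ) < (t : ℝ) / (r + 1) := by positivity
  have hmono : Monotone (fun x : ℝ => 1 - (t : ℝ) / (r + 1) + ((t : ℝ) / (r + 1)) * x) :=
    fun a b hab => by
      dsimp only
      have := mul_le_mul_of_nonneg_left hab hc.le
      linarith
  have hcont : Continuous (fun x : ℝ => 1 - (t : ℝ) / (r + 1) + ((t : ℝ) / (r + 1)) * x) := by
    fun_prop
  have hne : (Sset (t - 1) (r + 1)).Nonempty := Sset_nonempty (t - 1) (r + 1) (by omega)
  have hbdd : BddAbove (Sset (t - 1) (r + 1)) := ⟨1, fun x hx => mem_le_one hx⟩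
  rw [supRate_eq_sSup, supRate_eq_sSup, Sset_eq r t hr ht,
    ← Monotone.map_csSup_of_continuousAt hcont.continuousAt hmono hne hbdd]
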